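/- For every finite abelian group G and every finite tree T rooted at a non-leaf vertex, the restriction map sending a flow f to the function on leaves l ↦ f(parent edge of l) takes values in the set of sockets (i.e. the values of any flow on the leaf edges sum to 0), and this restriction map is a bijection between the set of flows of (T,G) and the set of sockets of (T,G). -/

import Mathlib

/-!
A finite rooted tree is encoded by a finite vertex type `V`, a root, and a parent
function such that iterating the parent function from any vertex reaches the root.
Edges correspond bijectively to non-root vertices: the edge attached to a non-root
vertex `v` is the edge `{v, parent v}`, i.e. the parent edge of `v`.
-/
structure PhyloTree where
  V : Type
  [fintypeV : Fintype V]
  [decEqV : DecidableEq V]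
  root : V
  parent : V → V
  parent_root : parent root = root
  reach : ∀ v : V, ∃ n : ℕ, parent^[n] v = root

attribute [instance] PhyloTree.fintypeV PhyloTree.decEqV

namespace PhyloTree

variable (T : PhyloTree)

/-- Edges of the tree, identified with non-root vertices (each non-root vertex
corresponds to its parent edge). -/
def Edge : Type := {v : T.V // v ≠ T.root}

instance : Fintype T.Edge := Subtype.fintype _
instance : DecidableEq T.Edge := Subtype.instDecidableEq

/-- The children of a vertex `v`. -/
def children (v : T.V) : Finset T.V :=
  Finset.univ.filter fun u => T.parent u = v ∧ u ≠ v

/-- The degree of a vertex: the number of its children, plus one for the parent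
edge if it is not the root. -/
def degree (v : T.V) : ℕ :=
  (T.children v).card + (if v = T.root then 0 else 1)

/-- A leaf is a vertex of degree one.  (We record `v ≠ root` as well; under the
standing hypothesis that the root is not a leaf this is no extra condition.) -/
def IsLeaf (v : T.V) : Prop := T.degree v = 1 ∧ v ≠ T.root

instance : DecidablePred T.IsLeaf := fun v => by unfold IsLeaf; infer_instance

/-- The type of leaves. -/
def Leaf : Type := {v : T.V // T.IsLeaf v}

instance : Fintype T.Leaf := Subtype.fintype _

/-- The leaf edge of a leaf, i.e. its parent edge. -/
def leafEdge (l : T.Leaf) : T.Edge := ⟨l.1, l.2.2⟩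

variable {G : Type} [AddCommGroup G]

/-- A flow: a function on edges such that the values on the edges incident to the
root sum to `0`, and for every non-leaf vertex `v ≠ root` the value on the parent
edge of `v` equals the sum of the values on the other edges incident to `v`
(i.e. the parent edges of the children of `v`). -/
def IsFlow (f : T.Edge → G) : Prop :=
  (∑ e : T.Edge, if T.parent e.1 = T.root then f e else 0) = 0 ∧
  ∀ e : T.Edge, ¬ T.IsLeaf e.1 →
    f e = ∑ e' : T.Edge, if T.parent e'.1 = e.1 ∧ e'.1 ≠ e.1 then f e' else 0

/-- The restriction of a function on edges to the leaf edges. -/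
def leafRes (f : T.Edge → G) : T.Leaf → G := fun l => f (T.leafEdge l)

end PhyloTree

namespace PhyloTree

variable (T : PhyloTree)

/-- `anc u v` : `v` is on the path from `u` to the root. -/
def anc (u v : T.V) : Prop := ∃ n, T.parent^[n] u = v

lemma parent_iterate_root (n : ℕ) : T.parent^[n] T.root = T.root :=
  Function.iterate_fixed T.parent_root n

lemma anc_step {u v : T.V} (h : T.anc u v) : T.anc u (T.parent v) := by
  obtain ⟨n, hn⟩ := h
  exact ⟨n + 1, by rw [Function.iterate_succ_apply', hn]⟩

lemma eq_root_of_cycle {v : T.V} {p : ℕ} (hp : 0 < p) (h : T.parent^[p] v = v) :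
    v = T.root := by
  obtain ⟨N, hN⟩ := T.reach v
  have hmul : ∀ k, T.parent^[k * p] v = v := by
    intro k
    induction k with
    | zero => simp
    | succ k ih =>
      rw [Nat.succ_mul, Function.iterate_add_apply, h, ih]
  have hge : N ≤ N * p := Nat.le_mul_of_pos_right N hp
  have : T.parent^[N * p] v = T.root := by
    rw [show N * p = (N * p - N) + N from (Nat.sub_add_cancel hge).symm,
      Function.iterate_add_apply, hN, T.parent_iterate_root]
  rw [hmul N] at this
  exact this

lemma anc_antisymm {u v : T.V} (h1 : T.anc u v) (h2 : T.anc v u) : u = v := by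
  obtain ⟨a, ha⟩ := h1
  obtain ⟨b, hb⟩ := h2
  rcases Nat.eq_zero_or_pos (b + a) with h0 | hpos
  · have : a = 0 := by omega
    rw [← ha, this]; rfl
  · have hcyc : T.parent^[b + a] u = u := by
      rw [Function.iterate_add_apply, ha, hb]
    have hu : u = T.root := T.eq_root_of_cycle hpos hcyc
    rw [hu, ← ha, hu, T.parent_iterate_root]

lemma exists_child {u v : T.V} (h : T.anc u v) (hne : u ≠ v) :
    ∃ c : T.V, T.parent c = v ∧ c ≠ v ∧ T.anc u c := by
  classical
  have hex : ∃ n, T.parent^[n] u = v := h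
  have hn : T.parent^[Nat.find hex] u = v := Nat.find_spec hex
  have hpos : 0 < Nat.find hex := by
    rcases Nat.eq_zero_or_pos (Nat.find hex) with h0 | h
    · exact absurd (by rw [← hn, h0]; rfl) hne
    · exact h
  obtain ⟨m, hm⟩ : ∃ m, Nat.find hex = m + 1 :=
    ⟨Nat.find hex - 1, (Nat.succ_pred_eq_of_pos hpos).symm⟩
  rw [hm] at hn
  refine ⟨T.parent^[m] u, ?_, ?_, ⟨m, rfl⟩⟩
  · exact (Function.iterate_succ_apply' T.parent m u).symm.trans hn
  · exact Nat.find_min hex (by omega)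

/-- The edges from a vertex `v` to its children. -/
def C (v : T.V) : Finset T.Edge :=
  Finset.univ.filter fun e => T.parent e.1 = v ∧ e.1 ≠ v

lemma mem_C {v : T.V} {e : T.Edge} :
    e ∈ T.C v ↔ T.parent e.1 = v ∧ e.1 ≠ v := by
  simp [C]

instance : DecidableEq T.Leaf := Subtype.instDecidableEq

open Classical in
/-- The leaves lying below a vertex `v`. -/
noncomputable def B (v : T.V) : Finset T.Leaf :=
  Finset.univ.filter fun l => T.anc l.1 v

lemma mem_B {v : T.V} {l : T.Leaf} : l ∈ T.B v ↔ T.anc l.1 v := by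
  simp [B]

lemma B_root : T.B T.root = Finset.univ := by
  refine Finset.eq_univ_iff_forall.mpr fun l => ?_
  rw [mem_B]
  exact T.reach l.1

open Classical in
/-- The descendant-count measure. -/
noncomputable def m (v : T.V) : ℕ :=
  (Finset.univ.filter fun u => T.anc u v).card

lemma m_lt {v : T.V} {e : T.Edge} (he : e ∈ T.C v) : T.m e.1 < T.m v := by
  classical
  obtain ⟨hp, hne⟩ := T.mem_C.mp he
  apply Finset.card_lt_card
  constructor
  · intro u hu
    simp only [Finset.mem_filter, Finset.mem_univ, true_and] at hu ⊢
    rw [← hp]; exact T.anc_step hu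
  · intro hsub
    have hv : v ∈ Finset.univ.filter fun u => T.anc u v :=
      by simp only [Finset.mem_filter, Finset.mem_univ, true_and]; exact ⟨0, rfl⟩
    have := hsub hv
    simp only [Finset.mem_filter, Finset.mem_univ, true_and] at this
    exact hne (T.anc_antisymm ⟨1, hp⟩ this)

lemma sibling_aux {c1 c2 v : T.V} (h : T.anc c1 c2) (hp1 : T.parent c1 = v)
    (hp2 : T.parent c2 = v) (hn2 : c2 ≠ v) : c1 = c2 := by
  obtain ⟨n, hn⟩ := h
  rcases n with _ | m
  · exact hn
  · exfalso
    have h1 : T.parent^[m] v = c2 := by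
      rw [← hp1, ← Function.iterate_succ_apply]
      exact hn
    have h2 : T.parent^[m + 1] v = v := by
      rw [Function.iterate_succ_apply', h1, hp2]
    have hvroot : v = T.root := T.eq_root_of_cycle (Nat.succ_pos m) h2
    apply hn2
    rw [← h1, hvroot, T.parent_iterate_root]

lemma sibling_eq {l c1 c2 v : T.V} (h1 : T.anc l c1) (h2 : T.anc l c2)
    (hp1 : T.parent c1 = v) (hp2 : T.parent c2 = v)
    (hn1 : c1 ≠ v) (hn2 : c2 ≠ v) : c1 = c2 := by
  obtain ⟨a, ha⟩ := h1
  obtain ⟨b, hb⟩ := h2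
  rcases le_total a b with hab | hab
  · refine T.sibling_aux ⟨b - a, ?_⟩ hp1 hp2 hn2
    rw [← ha, ← Function.iterate_add_apply, Nat.sub_add_cancel hab, hb]
  · refine (T.sibling_aux ⟨a - b, ?_⟩ hp2 hp1 hn1).symm
    rw [← hb, ← Function.iterate_add_apply, Nat.sub_add_cancel hab, ha]

lemma B_disjoint {v : T.V} {e1 e2 : T.Edge} (h1 : e1 ∈ T.C v) (h2 : e2 ∈ T.C v)
    (hne : e1 ≠ e2) : Disjoint (T.B e1.1) (T.B e2.1) := by
  rw [Finset.disjoint_left]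
  intro l hl1 hl2
  rw [mem_B] at hl1 hl2
  obtain ⟨hp1, hn1⟩ := T.mem_C.mp h1
  obtain ⟨hp2, hn2⟩ := T.mem_C.mp h2
  exact hne (Subtype.ext (T.sibling_eq hl1 hl2 hp1 hp2 hn1 hn2))

lemma B_eq_biUnion {v : T.V} (hv : ∀ l : T.Leaf, l.1 ≠ v) :
    T.B v = (T.C v).biUnion fun e => T.B e.1 := by
  ext l
  simp only [mem_B, Finset.mem_biUnion]
  constructor
  · intro h
    obtain ⟨c, hc, hcv, hanc⟩ := T.exists_child h (hv l)
    have hcroot : c ≠ T.root := by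
      intro h0
      rw [h0, T.parent_root] at hc
      exact hcv (h0.trans hc)
    exact ⟨⟨c, hcroot⟩, T.mem_C.mpr ⟨hc, hcv⟩, hanc⟩
  · rintro ⟨e, he, hanc⟩
    obtain ⟨hp, _⟩ := T.mem_C.mp he
    rw [← hp]
    exact T.anc_step hanc

variable {G : Type} [AddCommGroup G]

lemma sum_B (s : T.Leaf → G) {v : T.V} (hv : ∀ l : T.Leaf, l.1 ≠ v) :
    ∑ l ∈ T.B v, s l = ∑ e ∈ T.C v, ∑ l ∈ T.B e.1, s l := by
  rw [T.B_eq_biUnion hv, Finset.sum_biUnion]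
  exact fun e1 h1 e2 h2 hne => T.B_disjoint h1 h2 hne

lemma B_leaf {v : T.V} (hv : T.IsLeaf v) : T.B v = {⟨v, hv⟩} := by
  ext l
  erw [mem_B, Finset.mem_singleton, Subtype.ext_iff]
  constructor
  · intro h
    by_contra hne
    obtain ⟨c, hc, hcv, _⟩ := T.exists_child h hne
    have hcmem : c ∈ T.children v := by
      simp [children, hc, hcv]
    have hcard : (T.children v).card = 0 := by
      have := hv.1
      rw [degree, if_neg hv.2] at this
      omega
    rw [Finset.card_eq_zero] at hcard
    simp [hcard] at hcmem
  · intro h; exact ⟨0, h⟩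

lemma cond_sum (f : T.Edge → G) (v : T.V) :
    (∑ e' : T.Edge, if T.parent e'.1 = v ∧ e'.1 ≠ v then f e' else 0) =
      ∑ e' ∈ T.C v, f e' := (Finset.sum_filter _ _).symm

lemma root_sum (f : T.Edge → G) :
    (∑ e : T.Edge, if T.parent e.1 = T.root then f e else 0) =
      ∑ e ∈ T.C T.root, f e := by
  rw [C, Finset.sum_filter]
  refine Finset.sum_congr rfl fun e _ => ?_
  by_cases h : T.parent e.1 = T.root
  · simp [h, e.2]
  · simp [h]

lemma flow_eq_sum (f : T.Edge → G) (hf : T.IsFlow f) (e : T.Edge) :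
    f e = ∑ l ∈ T.B e.1, T.leafRes f l := by
  have key : ∀ n, ∀ e : T.Edge, T.m e.1 < n →
      f e = ∑ l ∈ T.B e.1, T.leafRes f l := by
    intro n
    induction n with
    | zero => exact fun e he => absurd he (Nat.not_lt_zero _)
    | succ n ih =>
      intro e he
      by_cases hl : T.IsLeaf e.1
      · rw [T.B_leaf hl]; erw [Finset.sum_singleton]
        rfl
      · have hv : ∀ l : T.Leaf, l.1 ≠ e.1 := fun l hl' => hl (hl' ▸ l.2)
        rw [hf.2 e hl, cond_sum, T.sum_B (T.leafRes f) hv]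
        refine Finset.sum_congr rfl fun e' he' => ?_
        exact ih e' (lt_of_lt_of_le (T.m_lt he') (Nat.lt_succ_iff.mp he))
  exact key (T.m e.1 + 1) e (Nat.lt_succ_self _)

lemma flow_socket_sum (f : T.Edge → G) (hf : T.IsFlow f) :
    ∑ l : T.Leaf, T.leafRes f l = 0 := by
  have hv : ∀ l : T.Leaf, l.1 ≠ T.root := fun l => l.2.2
  calc ∑ l : T.Leaf, T.leafRes f l
      = ∑ l ∈ T.B T.root, T.leafRes f l := by rw [B_root]
    _ = ∑ e ∈ T.C T.root, ∑ l ∈ T.B e.1, T.leafRes f l := T.sum_B _ hv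
    _ = ∑ e ∈ T.C T.root, f e :=
        Finset.sum_congr rfl fun e _ => (T.flow_eq_sum f hf e).symm
    _ = 0 := by rw [← T.root_sum]; exact hf.1

/-- The flow constructed from a socket. -/
noncomputable def F (s : T.Leaf → G) : T.Edge → G := fun e => ∑ l ∈ T.B e.1, s l

lemma leafRes_F (s : T.Leaf → G) : T.leafRes (T.F s) = s := by
  funext l
  show ∑ l' ∈ T.B l.1, s l' = s l
  rw [T.B_leaf l.2]; erw [Finset.sum_singleton]
  rfl

lemma isFlow_F (s : T.Leaf → G) (hs : ∑ l : T.Leaf, s l = 0) : T.IsFlow (T.F s) := by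
  constructor
  · rw [root_sum]
    have hv : ∀ l : T.Leaf, l.1 ≠ T.root := fun l => l.2.2
    calc ∑ e ∈ T.C T.root, T.F s e
        = ∑ e ∈ T.C T.root, ∑ l ∈ T.B e.1, s l := rfl
      _ = ∑ l ∈ T.B T.root, s l := (T.sum_B s hv).symm
      _ = 0 := by rw [B_root]; exact hs
  · intro e he
    rw [cond_sum]
    have hv : ∀ l : T.Leaf, l.1 ≠ e.1 := fun l hl' => he (hl' ▸ l.2)
    exact T.sum_B s hv

end PhyloTree


/-- For every finite abelian group `G` and every finite tree `T` rooted at a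
non-leaf vertex, the map sending a flow `f` to the function `l ↦ f (parent edge
of l)` on leaves takes values in the set of sockets (functions on leaves whose
values sum to `0`), and it is a bijection between the set of flows and the set
of sockets. -/
theorem flow_socket_bijection (G : Type) [AddCommGroup G] [Fintype G]
    (T : PhyloTree) (hroot : T.degree T.root ≠ 1) :
    (∀ f : T.Edge → G, T.IsFlow f → ∑ l : T.Leaf, T.leafRes f l = 0) ∧
    Set.BijOn (T.leafRes (G := G)) {f : T.Edge → G | T.IsFlow f}
      {s : T.Leaf → G | ∑ l : T.Leaf, s l = 0} := by
  classical
  refine ⟨fun f hf => T.flow_socket_sum f hf, ?_, ?_, ?_⟩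
  · intro f hf
    exact T.flow_socket_sum f hf
  · intro f1 h1 f2 h2 heq
    funext e
    rw [T.flow_eq_sum f1 h1 e, T.flow_eq_sum f2 h2 e, heq]
  · intro s hs
    exact ⟨T.F s, T.isFlow_F s hs, T.leafRes_F s⟩
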